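/- arXiv:2107.08875 — 2 statements merged into one kernel-verified Lean document; each statement's English description precedes it below -/
import Mathlib

section
/- For every i with 1 ≤ i ≤ N, the set Vᵢ := Oᵢ⁻ ∩ O_{N−i+1}⁺ is unrevisited for φ¹: for all m ∈ ℕ and all x ∈ M, if x ∈ Vᵢ and φᵐ(x) ∈ Vᵢ then φᵏ(x) ∈ Vᵢ for all 0 ≤ k ≤ m. -/
/-- For a filtration `(O i)` for `φ⁻¹` with associated filtration
`O⁺ j := interior ((O (N - j))ᶜ)` for `φ`, the set `V i := O i ∩ O⁺ (N - i + 1)`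
is unrevisited for `φ`: if `x ∈ V i` and `φ^[m] x ∈ V i`, then `φ^[k] x ∈ V i`
for all `0 ≤ k ≤ m`. -/
theorem unrevisited_of_filtration {M : Type*} [TopologicalSpace M] (φ : M ≃ₜ M) (N : ℕ)
    (O : ℕ → Set M)
    (hopen : ∀ i ≤ N, IsOpen (O i))
    (hstab : ∀ i ≤ N, φ.symm '' O i ⊆ O i)
    (hstab' : ∀ i ≤ N, φ '' interior (O (N - i))ᶜ ⊆ interior (O (N - i))ᶜ)
    (i : ℕ) (hi1 : 1 ≤ i) (hiN : i ≤ N) :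
    ∀ (m : ℕ) (x : M),
      x ∈ O i ∩ interior (O (N - (N - i + 1)))ᶜ →
      (⇑φ)^[m] x ∈ O i ∩ interior (O (N - (N - i + 1)))ᶜ →
      ∀ k ≤ m, (⇑φ)^[k] x ∈ O i ∩ interior (O (N - (N - i + 1)))ᶜ := by
  intro m x hx hmx k hk
  constructor
  · -- descend from m using φ.symm stability of O i
    have step : ∀ j : ℕ, (⇑φ)^[j + 1] x ∈ O i → (⇑φ)^[j] x ∈ O i := by
      intro j hj
      have := hstab i hiN ⟨(⇑φ)^[j + 1] x, hj, rfl⟩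
      rwa [Function.iterate_succ_apply', Homeomorph.symm_apply_apply] at this
    have key : ∀ d : ℕ, (⇑φ)^[m - d] x ∈ O i := by
      intro d
      induction d with
      | zero => simpa using hmx.1
      | succ d ih =>
        rcases Nat.lt_or_ge d m with h | h
        · have : m - d = (m - (d + 1)) + 1 := by omega
          rw [this] at ih
          exact step _ ih
        · have : m - (d + 1) = m - d := by omega
          rw [this]; exact ih
      
    have : k = m - (m - k) := by omega
    rw [this]; exact key _
  · -- ascend from 0 using φ stability of interior (O (i-1))ᶜ
    have hj : N - i + 1 ≤ N := by omega
    have step : ∀ j : ℕ, (⇑φ)^[j] x ∈ interior (O (N - (N - i + 1)))ᶜ →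
        (⇑φ)^[j + 1] x ∈ interior (O (N - (N - i + 1)))ᶜ := by
      intro j hjx
      have := hstab' (N - i + 1) hj ⟨(⇑φ)^[j] x, hjx, rfl⟩
      rwa [Function.iterate_succ_apply']
    clear hk
    induction k with
    | zero => simpa using hx.2
    | succ k ih => exact step _ ih
end

section
/- Let V be an unrevisited neighborhood of a compact invariant set K with closure(V) ∩ Ω = K, where Ω is the nonwandering set. Then the decreasing sequence of sets V ∩ φᵐ(V) converges uniformly to Wᵘ(K) ∩ closure(V) as m → +∞, in the sense that sup_{y ∈ V ∩ φᵐ(V)} d(y, Wᵘ(K) ∩ closure(V)) → 0 as m → +∞. -/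
open Filter Metric

/-- Uniform convergence of unrevisited neighborhoods: if `V` is an unrevisited
neighborhood of the basic set `K i₀` with `closure V ∩ Ω = K i₀`, then the
decreasing sequence `V ∩ φᵐ(V)` converges uniformly to `Wᵘ(K i₀) ∩ closure V`. -/
theorem unrevisited_uniform_convergence {M : Type*} [MetricSpace M] [CompactSpace M]
    (φ : ℝ → M → M)
    (hφ0 : ∀ x, φ 0 x = x)
    (hφadd : ∀ s t x, φ (s + t) x = φ s (φ t x))
    (hφcont : Continuous fun p : ℝ × M => φ p.1 p.2)
    (N : ℕ) (K : ℕ → Set M)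
    (hKcpt : ∀ i, 1 ≤ i → i ≤ N → IsCompact (K i))
    (hKinv : ∀ i, 1 ≤ i → i ≤ N → ∀ t, φ t '' K i = K i)
    -- the unstable sets of the basic sets partition `M`
    (hpart : ∀ x : M, ∃ i, 1 ≤ i ∧ i ≤ N ∧
      Tendsto (fun t : ℝ => infDist (φ (-t) x) (K i)) atTop (nhds 0))
    (hdisj : ∀ i j, 1 ≤ i → i ≤ N → 1 ≤ j → j ≤ N → i ≠ j →
      Disjoint {x : M | Tendsto (fun t : ℝ => infDist (φ (-t) x) (K i)) atTop (nhds 0)}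
               {x : M | Tendsto (fun t : ℝ => infDist (φ (-t) x) (K j)) atTop (nhds 0)})
    (i₀ : ℕ) (hi₀1 : 1 ≤ i₀) (hi₀N : i₀ ≤ N)
    (V : Set M) (hVopen : IsOpen V) (hKV : K i₀ ⊆ V)
    -- `V` is unrevisited for the time-one map
    (hunrev : ∀ (m : ℕ) (x : M), x ∈ V → (fun z => φ 1 z)^[m] x ∈ V →
      ∀ k ≤ m, (fun z => φ 1 z)^[k] x ∈ V)
    -- `closure V` meets the nonwandering set `Ω = ⋃ Kᵢ` exactly in `K i₀`
    (hclos : closure V ∩ (⋃ (i : ℕ) (_ : 1 ≤ i ∧ i ≤ N), K i) = K i₀) :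
    ∀ ε > 0, ∃ m₀ : ℕ, ∀ m ≥ m₀,
      ∀ y ∈ V ∩ (fun z => φ 1 z)^[m] '' V,
        infDist y
          ({x : M | Tendsto (fun t : ℝ => infDist (φ (-t) x) (K i₀)) atTop (nhds 0)}
            ∩ closure V) < ε := by
  intro ε hε
  -- continuity of each time-t map
  have hcontt : ∀ t : ℝ, Continuous fun x : M => φ t x := fun t =>
    hφcont.comp (continuous_const.prodMk continuous_id)
  -- iterates of the time-one map are integer-time flow maps
  have hflow : ∀ (k : ℕ) (x : M), (fun z => φ 1 z)^[k] x = φ (k : ℝ) x := by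
    intro k
    induction k with
    | zero => intro x; simp [hφ0]
    | succ n ih =>
      intro x
      rw [Function.iterate_succ_apply', ih, ← hφadd]
      congr 1
      push_cast
      ring
  -- each Kᵢ is contained in its unstable set
  have hKsubW : ∀ i, 1 ≤ i → i ≤ N → ∀ p ∈ K i,
      Tendsto (fun t : ℝ => infDist (φ (-t) p) (K i)) atTop (nhds 0) := by
    intro i h1 hN p hp
    have hmem : ∀ t : ℝ, φ (-t) p ∈ K i := by
      intro t
      have hp' : p ∈ φ t '' K i := (hKinv i h1 hN t).symm ▸ hp
      obtain ⟨q, hq, rfl⟩ := hp'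
      have : φ (-t) (φ t q) = q := by rw [← hφadd]; simp [hφ0]
      rw [this]; exact hq
    have : (fun t : ℝ => infDist (φ (-t) p) (K i)) = fun _ => 0 :=
      funext fun t => infDist_zero_of_mem (hmem t)
    rw [this]; exact tendsto_const_nhds
  -- degenerate case : K i₀ empty
  rcases Set.eq_empty_or_nonempty (K i₀) with hKe | hKne
  · refine ⟨0, fun m _ y hy => ?_⟩
    have hyS : y ∈ {x : M | Tendsto (fun t : ℝ => infDist (φ (-t) x) (K i₀)) atTop (nhds 0)}
        ∩ closure V := by
      refine ⟨?_, subset_closure hy.1⟩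
      simp [Set.mem_setOf_eq, hKe, infDist_empty]
    rw [infDist_zero_of_mem hyS]
    exact hε
  by_contra hcon
  push_neg at hcon
  choose m hm y hy hyd using hcon
  -- extract a convergent subsequence of the bad points
  obtain ⟨ystar, -, ψ, hψ, hyconv⟩ :=
    isCompact_univ.tendsto_subseq (fun n => Set.mem_univ (y n))
  -- backward iterates of the bad points stay in V
  have hback_mem : ∀ n k, k ≤ m n → φ (-(k : ℝ)) (y n) ∈ V := by
    intro n k hk
    obtain ⟨x, hxV, hxy⟩ := (hy n).2
    have hiter := hunrev (m n) x hxV (hxy ▸ (hy n).1) (m n - k) (Nat.sub_le _ _)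
    have hcalc : φ (-(k : ℝ)) (y n) = (fun z => φ 1 z)^[m n - k] x := by
      rw [← hxy, hflow, ← hφadd, hflow]
      congr 1
      rw [Nat.cast_sub hk]
      ring
    rw [hcalc]; exact hiter
  -- the whole integer backward orbit of ystar stays in closure V
  have hA : ∀ k : ℕ, φ (-(k : ℝ)) ystar ∈ closure V := by
    intro k
    refine mem_closure_of_tendsto (((hcontt (-(k : ℝ))).tendsto ystar).comp hyconv) ?_
    filter_upwards [eventually_ge_atTop k] with n hn
    exact hback_mem (ψ n) k (hn.trans ((hψ.le_apply).trans (hm (ψ n))))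
  have hystarV : ystar ∈ closure V := by simpa [hφ0] using hA 0
  -- ystar lies in some unstable set W j
  obtain ⟨j, hj1, hjN, hjW⟩ := hpart ystar
  -- K j is nonempty
  have hKjne : (K j).Nonempty := by
    by_contra hne
    rw [Set.not_nonempty_iff_eq_empty] at hne
    rcases eq_or_ne j i₀ with rfl | hji
    · exact hKne.ne_empty hne
    · obtain ⟨p, hp⟩ := hKne
      have hpWi : p ∈ {x : M | Tendsto (fun t : ℝ => infDist (φ (-t) x) (K i₀)) atTop (nhds 0)} :=
        hKsubW i₀ hi₀1 hi₀N p hp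
      have hpWj : p ∈ {x : M | Tendsto (fun t : ℝ => infDist (φ (-t) x) (K j)) atTop (nhds 0)} := by
        simp [Set.mem_setOf_eq, hne, infDist_empty]
      exact Set.disjoint_left.1 (hdisj j i₀ hj1 hjN hi₀1 hi₀N hji) hpWj hpWi
  -- a limit point z of the backward orbit of ystar
  obtain ⟨z, hzclosV, σ, hσ, hzconv⟩ :=
    (isClosed_closure.isCompact).tendsto_subseq (x := fun k : ℕ => φ (-(k : ℝ)) ystar) hA
  -- z belongs to K j
  have hzKj : z ∈ K j := by
    have h1 : Tendsto (fun k : ℕ => infDist (φ (-(k : ℝ)) ystar) (K j)) atTop (nhds 0) :=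
      hjW.comp tendsto_natCast_atTop_atTop
    have h2 : Tendsto (fun k : ℕ => infDist (φ (-((σ k : ℕ) : ℝ)) ystar) (K j)) atTop (nhds 0) :=
      h1.comp hσ.tendsto_atTop
    have h3 : Tendsto (fun k : ℕ => infDist (φ (-((σ k : ℕ) : ℝ)) ystar) (K j)) atTop
        (nhds (infDist z (K j))) :=
      ((continuous_infDist_pt (K j)).tendsto z).comp hzconv
    have : infDist z (K j) = 0 := tendsto_nhds_unique h3 h2
    exact ((hKcpt j hj1 hjN).isClosed.mem_iff_infDist_zero hKjne).2 this
  -- z belongs to K i₀ via the closure condition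
  have hzKi₀ : z ∈ K i₀ := by
    rw [← hclos]
    refine ⟨hzclosV, ?_⟩
    simp only [Set.mem_iUnion]
    exact ⟨j, ⟨hj1, hjN⟩, hzKj⟩
  -- hence j = i₀
  have hji₀ : j = i₀ := by
    by_contra hne
    have hzWj := hKsubW j hj1 hjN z hzKj
    have hzWi := hKsubW i₀ hi₀1 hi₀N z hzKi₀
    exact Set.disjoint_left.1 (hdisj j i₀ hj1 hjN hi₀1 hi₀N hne) hzWj hzWi
  subst hji₀
  -- ystar lies in the target set
  have hystarS : ystar ∈ {x : M | Tendsto (fun t : ℝ => infDist (φ (-t) x) (K j)) atTop (nhds 0)}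
      ∩ closure V := ⟨hjW, hystarV⟩
  -- contradiction : infDist (y (ψ n)) S ≥ ε but y (ψ n) → ystar ∈ S
  have hlim : Tendsto (fun n => infDist (y (ψ n))
      ({x : M | Tendsto (fun t : ℝ => infDist (φ (-t) x) (K j)) atTop (nhds 0)} ∩ closure V))
      atTop (nhds (infDist ystar
      ({x : M | Tendsto (fun t : ℝ => infDist (φ (-t) x) (K j)) atTop (nhds 0)} ∩ closure V))) :=
    ((continuous_infDist_pt _).tendsto ystar).comp hyconv
  have hge : ε ≤ infDist ystar
      ({x : M | Tendsto (fun t : ℝ => infDist (φ (-t) x) (K j)) atTop (nhds 0)} ∩ closure V) :=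
    ge_of_tendsto' hlim fun n => hyd (ψ n)
  rw [infDist_zero_of_mem hystarS] at hge
  exact absurd hge (not_le.2 hε)
end
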